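/- There exist constants C > 0 and λ₀ > 0 such that for all real λ ≥ λ₀ and all natural numbers l with l ≤ λ − √λ, D_λ(l) ≥ (1 − C/λ)/(1 − l/λ) − (1 + C/λ)/(λ·(1 − l/λ)³). -/

import Mathlib

/-- `D lam l = ∑_{k=0}^{l} l! / ((l-k)! * lam^k)`. -/
noncomputable def D (lam : ℝ) (l : ℕ) : ℝ :=
  ∑ k ∈ Finset.range (l + 1),
    (Nat.factorial l : ℝ) / ((Nat.factorial (l - k) : ℝ) * lam ^ k)

lemma desc_bound_aux (l : ℕ) : ∀ k : ℕ, k ≤ l →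
    (l:ℝ)^(k+1) - (l:ℝ)^k * ((k.choose 2 : ℕ) : ℝ) ≤ (l.descFactorial k : ℝ) * l := by
  intro k
  induction k with
  | zero => simp
  | succ k ih =>
    intro hk
    have hk' : k ≤ l := by omega
    have h1 := ih hk'
    have hlk : (0:ℝ) ≤ (l:ℝ) - k := by
      have : (k:ℝ) ≤ l := by exact_mod_cast hk'
      linarith
    have hdesc : (l.descFactorial (k+1) : ℝ) = ((l:ℝ) - k) * l.descFactorial k := by
      rw [Nat.descFactorial_succ]
      push_cast [Nat.cast_sub hk']
      ring
    have hcsucc : (((k+1).choose 2 : ℕ) : ℝ) = ((k.choose 2 : ℕ) : ℝ) + k := by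
      rw [Nat.choose_succ_succ]
      push_cast
      simp [Nat.choose_one_right]
      ring
    have h2 : ((l:ℝ) - k) * ((l:ℝ)^(k+1) - (l:ℝ)^k * ((k.choose 2 : ℕ) : ℝ))
        ≤ ((l:ℝ) - k) * ((l.descFactorial k : ℝ) * l) :=
      mul_le_mul_of_nonneg_left h1 hlk
    rw [hdesc, hcsucc]
    have hpow : (0:ℝ) ≤ (l:ℝ)^k := by positivity
    have hknn : (0:ℝ) ≤ (k:ℝ) := by positivity
    have hcnn : (0:ℝ) ≤ ((k.choose 2 : ℕ) : ℝ) := by positivity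
    have key : ((l:ℝ) - k) * ((l:ℝ)^(k+1) - (l:ℝ)^k * ((k.choose 2 : ℕ) : ℝ))
        = (l:ℝ)^(k+1+1) - (l:ℝ)^(k+1) * (((k.choose 2 : ℕ) : ℝ) + k)
          + (k:ℝ) * ((k.choose 2 : ℕ) : ℝ) * (l:ℝ)^k := by ring
    have hn : (0:ℝ) ≤ (k:ℝ) * ((k.choose 2 : ℕ) : ℝ) * (l:ℝ)^k :=
      mul_nonneg (mul_nonneg hknn hcnn) hpow
    linarith

lemma err_sum_aux {r : ℝ} (h0 : 0 ≤ r) (h1 : r < 1) (n : ℕ) :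
    ∑ k ∈ Finset.range n, ((k.choose 2 : ℕ) : ℝ) * r ^ k ≤ r ^ 2 / (1 - r) ^ 3 := by
  have hr : ‖r‖ < 1 := by rw [Real.norm_eq_abs, abs_of_nonneg h0]; exact h1
  have hg : Summable (fun k : ℕ => (((k+2).choose 2 : ℕ) : ℝ) * r ^ k) := by
    exact_mod_cast summable_choose_mul_geometric_of_norm_lt_one 2 hr
  have hgs : ∑' k : ℕ, (((k+2).choose 2 : ℕ) : ℝ) * r ^ k = 1 / (1 - r) ^ 3 := by
    exact_mod_cast tsum_choose_mul_geometric_of_norm_lt_one 2 hr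
  have hf : Summable (fun k : ℕ => ((k.choose 2 : ℕ) : ℝ) * r ^ k) := by
    apply Summable.of_nonneg_of_le (fun k => by positivity) _ hg
    intro k
    have : k.choose 2 ≤ (k+2).choose 2 := Nat.choose_le_choose 2 (by omega)
    have h2 : ((k.choose 2 : ℕ) : ℝ) ≤ (((k+2).choose 2 : ℕ) : ℝ) := by exact_mod_cast this
    exact mul_le_mul_of_nonneg_right h2 (by positivity)
  have hx : (1 - r) ≠ 0 := by linarith
  have key : ∑' k : ℕ, ((k.choose 2 : ℕ) : ℝ) * r ^ k = r ^ 2 / (1 - r) ^ 3 := by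
    rw [Summable.tsum_eq_zero_add hf, Summable.tsum_eq_zero_add ((summable_nat_add_iff 1).2 hf)]
    have e : (fun b : ℕ => (((b+1+1).choose 2 : ℕ) : ℝ) * r ^ (b+1+1))
        = fun b : ℕ => (((b+2).choose 2 : ℕ) : ℝ) * r ^ b * (r * r) := by
      funext b
      rw [show b+1+1 = b+2 from rfl]
      ring
    rw [e, tsum_mul_right, hgs]
    norm_num
    field_simp
  calc ∑ k ∈ Finset.range n, ((k.choose 2 : ℕ) : ℝ) * r ^ k
      ≤ ∑' k : ℕ, ((k.choose 2 : ℕ) : ℝ) * r ^ k :=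
        Summable.sum_le_tsum _ (fun k _ => by positivity) hf
    _ = r ^ 2 / (1 - r) ^ 3 := key

lemma tail_bound_aux (lam : ℝ) (hlam : 4 ≤ lam) (l : ℕ) (hl1 : 1 ≤ l)
    (hub : (l:ℝ) ≤ lam - Real.sqrt lam) :
    ((l:ℝ)/lam)^(l+1) ≤ 216/lam := by
  have hpos : (0:ℝ) < lam := by linarith
  have hs : (0:ℝ) < Real.sqrt lam := Real.sqrt_pos.2 hpos
  have hsq : Real.sqrt lam * Real.sqrt lam = lam := Real.mul_self_sqrt hpos.le
  set r : ℝ := (l:ℝ)/lam with hrdef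
  have h0r : 0 ≤ r := by positivity
  have hrub : r ≤ 1 - 1/Real.sqrt lam := by
    rw [hrdef, div_le_iff₀ hpos]
    have : (1 - 1/Real.sqrt lam) * lam = lam - Real.sqrt lam := by
      field_simp
      nlinarith
    rw [this]; exact hub
  have hs1 : (1:ℝ) ≤ Real.sqrt lam := by nlinarith
  have hr1 : r ≤ 1 := by
    have : 1/Real.sqrt lam > 0 := by positivity
    linarith
  rcases eq_or_lt_of_le hl1 with h1 | h2
  · -- l = 1
    have : l = 1 := h1.symm
    subst this
    have hre : r = 1/lam := by rw [hrdef]; norm_num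
    rw [hre, div_pow, one_pow, div_le_div_iff₀ (by positivity) hpos]
    have h4 : 4*lam ≤ lam*lam := by nlinarith
    ring_nf
    nlinarith
  · -- l ≥ 2
    have hl2 : 2 ≤ l := h2
    by_cases hc : Real.sqrt lam * Real.log lam ≤ (l:ℝ) + 1
    · -- exp branch
      have e1 : r^(l+1) ≤ (1 - 1/Real.sqrt lam)^(l+1) := pow_le_pow_left₀ h0r hrub _
      have h01 : (0:ℝ) ≤ 1 - 1/Real.sqrt lam := by
        have : 1/Real.sqrt lam ≤ 1 := by rw [div_le_one hs]; exact hs1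
        linarith
      have e2 : 1 - 1/Real.sqrt lam ≤ Real.exp (-(1/Real.sqrt lam)) := by
        have := Real.add_one_le_exp (-(1/Real.sqrt lam))
        linarith
      have e3 : (1 - 1/Real.sqrt lam)^(l+1) ≤ Real.exp (-(1/Real.sqrt lam))^(l+1) :=
        pow_le_pow_left₀ h01 e2 _
      have e4 : Real.exp (-(1/Real.sqrt lam))^(l+1) = Real.exp (((l:ℝ)+1) * (-(1/Real.sqrt lam))) := by
        rw [← Real.exp_nat_mul]
        norm_num
      have e5' : Real.log lam ≤ ((l:ℝ)+1) / Real.sqrt lam := by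
        rw [le_div_iff₀ hs, mul_comm]
        linarith
      have e5 : ((l:ℝ)+1) * (-(1/Real.sqrt lam)) ≤ -Real.log lam := by
        have : ((l:ℝ)+1) * (-(1/Real.sqrt lam)) = -(((l:ℝ)+1)/Real.sqrt lam) := by ring
        rw [this]
        linarith
      have e6 : Real.exp (((l:ℝ)+1) * (-(1/Real.sqrt lam))) ≤ Real.exp (-Real.log lam) :=
        Real.exp_le_exp.2 e5
      have e7 : Real.exp (-Real.log lam) = 1/lam := by
        rw [Real.exp_neg, Real.exp_log hpos, one_div]
      have e8 : (1:ℝ)/lam ≤ 216/lam := by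
        rw [div_le_div_iff₀ hpos hpos]
        nlinarith
      linarith [e1, e3, e4 ▸ e3, e6, e7]
    · -- polynomial branch
      push_neg at hc
      have hllog : (l:ℝ) ≤ Real.sqrt lam * Real.log lam := by linarith
      have hlog0 : 0 ≤ Real.log lam := Real.log_nonneg (by linarith)
      have hrlog : r ≤ Real.log lam / Real.sqrt lam := by
        rw [hrdef, div_le_div_iff₀ hpos hs]
        calc (l:ℝ) * Real.sqrt lam ≤ (Real.sqrt lam * Real.log lam) * Real.sqrt lam :=
              mul_le_mul_of_nonneg_right hllog hs.le
          _ = Real.log lam * lam := by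
              rw [mul_comm (Real.sqrt lam) (Real.log lam), mul_assoc, hsq]
      have p1 : r^(l+1) ≤ r^3 := pow_le_pow_of_le_one h0r hr1 (by omega)
      have p2 : r^3 ≤ (Real.log lam / Real.sqrt lam)^3 := pow_le_pow_left₀ h0r hrlog 3
      have hr6 : (0:ℝ) < lam ^ ((1:ℝ)/6) := Real.rpow_pos_of_pos hpos _
      have p3 : Real.log lam ≤ 6 * lam ^ ((1:ℝ)/6) := by
        have h6 : Real.log (lam ^ ((1:ℝ)/6)) = (1/6) * Real.log lam := Real.log_rpow hpos _
        have := Real.log_le_sub_one_of_pos hr6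
        rw [h6] at this
        linarith
      have p4 : (lam ^ ((1:ℝ)/6))^3 = Real.sqrt lam := by
        rw [← Real.rpow_natCast (lam ^ ((1:ℝ)/6)) 3, ← Real.rpow_mul hpos.le]
        rw [Real.sqrt_eq_rpow]
        norm_num
      have p5 : (Real.log lam)^3 ≤ 216 * Real.sqrt lam := by
        calc (Real.log lam)^3 ≤ (6 * lam ^ ((1:ℝ)/6))^3 := pow_le_pow_left₀ hlog0 p3 3
          _ = 216 * Real.sqrt lam := by rw [← p4]; ring
      have h3 : Real.sqrt lam ^ 3 = lam * Real.sqrt lam := by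
        rw [pow_succ, Real.sq_sqrt hpos.le]
      have p6 : (Real.log lam / Real.sqrt lam)^3 ≤ 216/lam := by
        rw [div_pow, div_le_div_iff₀ (by positivity) hpos, h3]
        nlinarith [mul_le_mul_of_nonneg_right p5 hpos.le]
      linarith

set_option maxHeartbeats 1000000 in
/-- There are constants `C > 0`, `λ₀ > 0` such that for all `λ ≥ λ₀` and all naturals
`l ≤ λ − √λ`, `D_λ(l) ≥ (1 − C/λ)/(1 − l/λ) − (1 + C/λ)/(λ(1 − l/λ)³)`. -/
theorem D_lower_bound_body :
    ∃ C > (0 : ℝ), ∃ lam₀ > (0 : ℝ), ∀ lam : ℝ, lam₀ ≤ lam → ∀ l : ℕ,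
      (l : ℝ) ≤ lam - Real.sqrt lam →
      D lam l ≥ (1 - C / lam) / (1 - (l : ℝ) / lam)
          - (1 + C / lam) / (lam * (1 - (l : ℝ) / lam) ^ 3) := by
  refine ⟨216, by norm_num, 4, by norm_num, fun lam hlam l hub => ?_⟩
  have hpos : (0:ℝ) < lam := by linarith
  have hs : (0:ℝ) < Real.sqrt lam := Real.sqrt_pos.2 hpos
  have hsq : Real.sqrt lam * Real.sqrt lam = lam := Real.mul_self_sqrt hpos.le
  rcases Nat.eq_zero_or_pos l with rfl | hl1
  · -- l = 0
    have hD0 : D lam 0 = 1 := by simp [D]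
    rw [hD0]
    have h1 : (0:ℝ) < 216/lam := by positivity
    have h2 : (0:ℝ) ≤ (1 + 216/lam)/lam := by positivity
    push_cast
    norm_num
    nlinarith
  · -- l ≥ 1
    have hl0 : (0:ℝ) < l := by exact_mod_cast hl1
    set r : ℝ := (l:ℝ)/lam with hrdef
    have hr0 : 0 ≤ r := by positivity
    have hrub : r ≤ 1 - 1/Real.sqrt lam := by
      rw [hrdef, div_le_iff₀ hpos]
      have : (1 - 1/Real.sqrt lam) * lam = lam - Real.sqrt lam := by
        field_simp; nlinarith
      rw [this]; exact hub
    have hr1 : r < 1 := by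
      have : 0 < 1/Real.sqrt lam := by positivity
      linarith
    set X : ℝ := 1 - r with hXdef
    have hXpos : 0 < X := by rw [hXdef]; linarith
    -- per-term bound
    have hterm : ∀ k ∈ Finset.range (l+1),
        r^k - ((k.choose 2 : ℕ) : ℝ) * r^k / (l:ℝ)
          ≤ (Nat.factorial l : ℝ) / ((Nat.factorial (l - k) : ℝ) * lam ^ k) := by
      intro k hk
      rw [Finset.mem_range] at hk
      have hkl : k ≤ l := by omega
      have hfact : ((l - k).factorial : ℝ) * (l.descFactorial k : ℝ) = (l.factorial : ℝ) := by
        exact_mod_cast congrArg (Nat.cast : ℕ → ℝ) (Nat.factorial_mul_descFactorial hkl)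
      have hfpos : (0:ℝ) < ((l-k).factorial : ℝ) := by exact_mod_cast Nat.factorial_pos _
      have htm : (Nat.factorial l : ℝ) / ((Nat.factorial (l - k) : ℝ) * lam ^ k)
          = (l.descFactorial k : ℝ) / lam ^ k := by
        rw [← hfact]
        field_simp
      rw [htm]
      have hkey : r^k - ((k.choose 2 : ℕ) : ℝ) * r^k / (l:ℝ)
          = ((l:ℝ)^(k+1) - (l:ℝ)^k * ((k.choose 2 : ℕ) : ℝ)) / ((l:ℝ) * lam ^ k) := by
        rw [hrdef]
        field_simp
        have hlk : lam ^ k * lam⁻¹ ^ k = 1 := by rw [← mul_pow, mul_inv_cancel₀ hpos.ne', one_pow]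
        linear_combination ((l:ℝ) * (l:ℝ)^k - (l:ℝ)^k * ((k.choose 2 : ℕ) : ℝ)) * hlk
      rw [hkey, div_le_div_iff₀ (by positivity) (by positivity)]
      have hdb := desc_bound_aux l k hkl
      have hpk : (0:ℝ) ≤ lam ^ k := by positivity
      nlinarith [mul_le_mul_of_nonneg_right hdb hpk]
    -- sum lower bound
    have hsum : ∑ k ∈ Finset.range (l+1), (r^k - ((k.choose 2 : ℕ) : ℝ) * r^k / (l:ℝ))
        ≤ D lam l := Finset.sum_le_sum hterm
    have hsplit : ∑ k ∈ Finset.range (l+1), (r^k - ((k.choose 2 : ℕ) : ℝ) * r^k / (l:ℝ))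
        = (∑ k ∈ Finset.range (l+1), r^k)
          - (∑ k ∈ Finset.range (l+1), ((k.choose 2 : ℕ) : ℝ) * r^k) / (l:ℝ) := by
      rw [Finset.sum_sub_distrib, Finset.sum_div]
    have hG : ∑ k ∈ Finset.range (l+1), r^k = (1 - r^(l+1))/X := by
      rw [geom_sum_eq (ne_of_lt hr1), hXdef]
      rw [div_eq_div_iff (by intro h; nlinarith : r - 1 ≠ 0) (by intro h; nlinarith : (1:ℝ) - r ≠ 0)]
      ring
    have hS : ∑ k ∈ Finset.range (l+1), ((k.choose 2 : ℕ) : ℝ) * r^k ≤ r^2/X^3 := by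
      rw [hXdef]
      exact err_sum_aux hr0 hr1 (l+1)
    -- error over l
    have herr : (∑ k ∈ Finset.range (l+1), ((k.choose 2 : ℕ) : ℝ) * r^k) / (l:ℝ)
        ≤ 1/(lam * X^3) := by
      have s1 : (∑ k ∈ Finset.range (l+1), ((k.choose 2 : ℕ) : ℝ) * r^k) / (l:ℝ)
          ≤ (r^2/X^3) / (l:ℝ) := by
        exact div_le_div_of_nonneg_right hS hl0.le
      have s2 : (r^2/X^3) / (l:ℝ) = (l:ℝ)/(lam^2 * X^3) := by
        rw [hrdef]
        field_simp
      have s3 : (l:ℝ)/(lam^2 * X^3) ≤ 1/(lam * X^3) := by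
        rw [div_le_div_iff₀ (by positivity) (by positivity)]
        have hlle : (l:ℝ) ≤ lam := by nlinarith [hs.le]
        nlinarith [pow_pos hXpos 3, mul_pos hpos (pow_pos hXpos 3)]
      linarith [s1, s2 ▸ s1]
    -- tail bound
    have htail : r^(l+1) ≤ 216/lam := tail_bound_aux lam hlam l hl1 hub
    -- combine
    have hD : (1 - r^(l+1))/X - 1/(lam * X^3) ≤ D lam l := by
      have := hsum
      rw [hsplit, hG] at this
      linarith
    have hfin : (1 - 216/lam)/X - (1 + 216/lam)/(lam * X^3)
        ≤ (1 - r^(l+1))/X - 1/(lam * X^3) := by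
      have t1 : (1 - 216/lam)/X ≤ (1 - r^(l+1))/X := by
        rw [div_le_div_iff₀ hXpos hXpos]
        nlinarith
      have t2 : 1/(lam * X^3) ≤ (1 + 216/lam)/(lam * X^3) := by
        rw [div_le_div_iff₀ (by positivity) (by positivity)]
        have h216 : 0 < 216/lam := by positivity
        nlinarith [mul_pos h216 (mul_pos hpos (pow_pos hXpos 3))]
      linarith
    rw [ge_iff_le]
    calc (1 - 216/lam)/X - (1 + 216/lam)/(lam * X^3)
        ≤ (1 - r^(l+1))/X - 1/(lam * X^3) := hfin
      _ ≤ D lam l := hD
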